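/- Let n = 2m with m ≥ 1, let R_n be the dihedral quandle of order n, and let D(R_n) be its symmetric double. The quotient set D(R_n) ⊗ D(R_n) / ⟨τ⟩ has exactly 5(m+1) elements if m is odd, and exactly 5m+6 elements if m is even; its elements are, for each even k with 0 ≤ k ≤ m: {E(k)_0^{+,+}}, {E(k)_0^{−,−}}, {E(k)_0^{+,−}, E(k)_0^{−,+}}, {E(k)_1^{+,+}}, {E(k)_1^{−,−}}, {E(k)_1^{+,−}, E(k)_1^{−,+}}, and for each odd k with 0 ≤ k ≤ m: {E(k)_0^{+,+}, E(k)_1^{+,+}}, {E(k)_0^{−,−}, E(k)_1^{−,−}}, {E(k)_0^{+,−}, E(k)_1^{−,+}}, {E(k)_1^{+,−}, E(k)_0^{−,+}}. -/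

import Mathlib

/-- A quandle: a set with two binary operations `op` (`∗`) and `inv` (`∗̄`)
satisfying (Q1), (Q2), (Q3). -/
structure QuandleStr (X : Type) where
  op : X → X → X
  inv : X → X → X
  q1 : ∀ x, op x x = x
  q2a : ∀ x y, inv (op x y) y = x
  q2b : ∀ x y, op (inv x y) y = x
  q3 : ∀ x y z, op (op x y) z = op (op x z) (op y z)

namespace QuandleStr

variable {X Y : Type} (Q : QuandleStr X)

lemma inv_self (x : X) : Q.inv x x = x := by
  have h := Q.q2a x x
  rwa [Q.q1] at h

lemma op_right_cancel {a b : X} (z : X) (h : Q.op a z = Q.op b z) : a = b := by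
  have h2 := congrArg (fun t => Q.inv t z) h
  simpa [Q.q2a] using h2

lemma distA (x y z : X) : Q.inv (Q.op x y) z = Q.op (Q.inv x z) (Q.inv y z) := by
  apply Q.op_right_cancel z
  rw [Q.q2b, Q.q3, Q.q2b, Q.q2b]

lemma distB (x y z : X) : Q.op (Q.inv x y) z = Q.inv (Q.op x z) (Q.op y z) := by
  have h : Q.op (Q.op (Q.inv x y) y) z = Q.op (Q.op (Q.inv x y) z) (Q.op y z) := Q.q3 _ _ _
  rw [Q.q2b] at h
  have h2 := congrArg (fun t => Q.inv t (Q.op y z)) h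
  simpa [Q.q2a] using h2.symm

lemma distD (x y z : X) : Q.inv (Q.inv x y) z = Q.inv (Q.inv x z) (Q.inv y z) := by
  apply Q.op_right_cancel z
  rw [Q.q2b, Q.distB, Q.q2b, Q.q2b]

/-- One step of the relation generating the tensor product:
`(x₁, x₂) ≈ (x₁ ∗ z, x₂ ∗ z)`. -/
def tensorStep (p q : X × X) : Prop :=
  ∃ z, q = (Q.op p.1 z, Q.op p.2 z)

/-- The equivalence relation `≈` defining the tensor product `X ⊗ X`:
the equivalence relation generated by `(x₁, x₂) ≈ (x₁ ∗ z, x₂ ∗ z)`. -/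
def tensorEqv : X × X → X × X → Prop :=
  Relation.EqvGen Q.tensorStep

/-- The tensor product `X ⊗ X` of a quandle. -/
def Tensor : Type :=
  Quotient (Relation.EqvGen.setoid Q.tensorStep)

/-- The symmetric double `D(X)` of a quandle, realized on `X × Bool`
(`(x, true)` is `x⁺` and `(x, false)` is `x⁻`), with
`x^ε ∗ y⁺ = (x∗y)^ε`, `x^ε ∗ y⁻ = (x∗̄y)^ε`, `x^ε ∗̄ y⁺ = (x∗̄y)^ε`,
`x^ε ∗̄ y⁻ = (x∗y)^ε`. -/
def double : QuandleStr (X × Bool) where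
  op a b := (if b.2 then Q.op a.1 b.1 else Q.inv a.1 b.1, a.2)
  inv a b := (if b.2 then Q.inv a.1 b.1 else Q.op a.1 b.1, a.2)
  q1 := by rintro ⟨x, ε⟩; cases ε <;> simp [Q.q1, Q.inv_self]
  q2a := by rintro ⟨x, ε⟩ ⟨y, δ⟩; cases δ <;> simp [Q.q2a, Q.q2b]
  q2b := by rintro ⟨x, ε⟩ ⟨y, δ⟩; cases δ <;> simp [Q.q2a, Q.q2b]
  q3 := by
    rintro ⟨x, ε⟩ ⟨y, δ⟩ ⟨z, γ⟩
    cases δ <;> cases γ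
    · show (Q.inv (Q.inv x y) z, ε) = (Q.inv (Q.inv x z) (Q.inv y z), ε)
      rw [Q.distD]
    · show (Q.op (Q.inv x y) z, ε) = (Q.inv (Q.op x z) (Q.op y z), ε)
      rw [Q.distB]
    · show (Q.inv (Q.op x y) z, ε) = (Q.op (Q.inv x z) (Q.inv y z), ε)
      rw [Q.distA]
    · show (Q.op (Q.op x y) z, ε) = (Q.op (Q.op x z) (Q.op y z), ε)
      rw [Q.q3]

/-- The equivalence relation generated by `≈` and the swap `τ`. -/
def tensorTauEqv : X × X → X × X → Prop :=
  Relation.EqvGen (fun p q => Q.tensorStep p q ∨ q = p.swap)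

/-- The quotient `X ⊗ X / ⟨τ⟩`. -/
def TensorTau : Type :=
  Quotient (Relation.EqvGen.setoid (fun p q => Q.tensorStep p q ∨ q = p.swap))

/-- The equivalence relation generated by `≈` and `(x₁, x₂) ↦ (ρ(x₁), ρ(x₂))`
for an involution `r` of `X`. -/
def tensorRhoEqv (r : X → X) : X × X → X × X → Prop :=
  Relation.EqvGen (fun p q => Q.tensorStep p q ∨ q = (r p.1, r p.2))

/-- The quotient `X ⊗ X / ⟨ρ⟩`. -/
def TensorRho (r : X → X) : Type :=
  Quotient (Relation.EqvGen.setoid (fun p q => Q.tensorStep p q ∨ q = (r p.1, r p.2)))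

/-- The equivalence relation generated by `≈`, `τ` and `ρ`. -/
def tensorTauRhoEqv (r : X → X) : X × X → X × X → Prop :=
  Relation.EqvGen (fun p q => Q.tensorStep p q ∨ q = p.swap ∨ q = (r p.1, r p.2))

/-- The quotient `X ⊗ X / ⟨τ, ρ⟩`. -/
def TensorTauRho (r : X → X) : Type :=
  Quotient (Relation.EqvGen.setoid
    (fun p q => Q.tensorStep p q ∨ q = p.swap ∨ q = (r p.1, r p.2)))

end QuandleStr

/-- The good involution `ρ` on the symmetric double `D(X) = X × Bool`,
exchanging `x⁺` and `x⁻`. -/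
def doubleRho {X : Type} : X × Bool → X × Bool := fun a => (a.1, !a.2)

/-- The dihedral quandle `R_n` of order `n`: `ℤ/nℤ` with `x ∗ y = x ∗̄ y = 2y − x`. -/
def dihedral (n : ℕ) : QuandleStr (ZMod n) where
  op x y := 2 * y - x
  inv x y := 2 * y - x
  q1 := by intro x; ring
  q2a := by intro x y; ring
  q2b := by intro x y; ring
  q3 := by intro x y z; ring

/-- The distance `d_n` on `ℤ/nℤ`:
`d_n(x, y) = min {|a − b| : a, b ∈ ℤ, a ≡ x, b ≡ y (mod n)}`. -/
noncomputable def ddist (n : ℕ) (x y : ZMod n) : ℕ :=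
  sInf {d : ℕ | ∃ a b : ℤ, (a : ZMod n) = x ∧ (b : ZMod n) = y ∧ (a - b).natAbs = d}

/-- `x ∈ ℤ/nℤ` is represented by an even integer. -/
def isEvenClass (n : ℕ) (x : ZMod n) : Prop :=
  ∃ a : ℤ, Even a ∧ (a : ZMod n) = x

/-- `x ∈ ℤ/nℤ` is represented by an odd integer. -/
def isOddClass (n : ℕ) (x : ZMod n) : Prop :=
  ∃ a : ℤ, Odd a ∧ (a : ZMod n) = x

/-- `E(k)₀^{ε,δ} = {(i, i+k)^{ε,δ}, (i, i−k)^{ε,δ} : i ∈ R_{n,even}}`. -/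
def EsetD0 (n k : ℕ) (ε δ : Bool) : Set ((ZMod n × Bool) × (ZMod n × Bool)) :=
  {p | ∃ i : ZMod n, isEvenClass n i ∧
    (p = ((i, ε), (i + (k : ZMod n), δ)) ∨ p = ((i, ε), (i - (k : ZMod n), δ)))}

/-- `E(k)₁^{ε,δ} = {(i, i+k)^{ε,δ}, (i, i−k)^{ε,δ} : i ∈ R_{n,odd}}`. -/
def EsetD1 (n k : ℕ) (ε δ : Bool) : Set ((ZMod n × Bool) × (ZMod n × Bool)) :=
  {p | ∃ i : ZMod n, isOddClass n i ∧
    (p = ((i, ε), (i + (k : ZMod n), δ)) ∨ p = ((i, ε), (i - (k : ZMod n), δ)))}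


namespace S15

abbrev P (m : ℕ) := (ZMod (2*m) × Bool) × (ZMod (2*m) × Bool)

def par (m : ℕ) : ZMod (2*m) →+* ZMod 2 := ZMod.castHom ⟨m, rfl⟩ (ZMod 2)

lemma par_natCast (m k : ℕ) : par m (k : ZMod (2*m)) = (k : ZMod 2) := map_natCast _ k

lemma par_val (m : ℕ) [NeZero (2*m)] (a : ZMod (2*m)) : par m a = ((a.val : ℕ) : ZMod 2) := by
  conv_lhs => rw [show a = ((a.val : ℕ) : ZMod (2*m)) by simp [ZMod.natCast_val, ZMod.cast_id]]
  exact par_natCast m a.val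

lemma neg_par : ∀ x : ZMod 2, -x = x := by decide

lemma exists_half (m : ℕ) [NeZero (2*m)] (a : ZMod (2*m)) (h : par m a = 0) :
    ∃ t : ZMod (2*m), a = 2 * t := by
  rw [par_val] at h
  obtain ⟨u, hu⟩ := (ZMod.natCast_eq_zero_iff _ 2).1 h
  exact ⟨(u : ZMod (2*m)), by
    rw [show a = ((a.val : ℕ) : ZMod (2*m)) by simp [ZMod.natCast_val, ZMod.cast_id], hu]
    push_cast; ring⟩

lemma double_op (m : ℕ) (a b : ZMod (2*m) × Bool) :
    ((dihedral (2*m)).double).op a b = (2 * b.1 - a.1, a.2) := by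
  obtain ⟨y, δ⟩ := b; cases δ <;> rfl

lemma step_iff (m : ℕ) (p q : P m) :
    ((dihedral (2*m)).double).tensorStep p q ↔
      ∃ z : ZMod (2*m), q = ((2*z - p.1.1, p.1.2), (2*z - p.2.1, p.2.2)) := by
  constructor
  · rintro ⟨z, rfl⟩; exact ⟨z.1, by rw [double_op, double_op]⟩
  · rintro ⟨z, rfl⟩; exact ⟨(z, true), by rw [double_op, double_op]⟩

def Cls (m : ℕ) (d : ZMod (2*m)) (j : ZMod 2) (e1 e2 : Bool) : Set (P m) :=
  {q | (q.2.1 - q.1.1 = d ∨ q.2.1 - q.1.1 = -d) ∧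
    ((par m q.1.1 = j ∧ q.1.2 = e1 ∧ q.2.2 = e2) ∨
     (par m q.1.1 = j + par m d ∧ q.1.2 = e2 ∧ q.2.2 = e1))}

end S15
namespace S15

variable {m : ℕ}

lemma add_add_self (j c : ZMod 2) : j + c + c = j := by revert j c; decide

lemma two_mul_sub (x y : ZMod 2) : 2 * x - y = y := by revert x y; decide

lemma cls_key [NeZero (2*m)] (d : ZMod (2*m)) (j : ZMod 2) (e1 e2 : Bool) (a b : P m)
    (h : ((dihedral (2*m)).double).tensorStep a b ∨ b = a.swap) :
    a ∈ Cls m d j e1 e2 ↔ b ∈ Cls m d j e1 e2 := by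
  obtain ⟨⟨a1, f1⟩, ⟨a2, f2⟩⟩ := a
  rcases h with h | h
  · rw [step_iff] at h
    obtain ⟨z, rfl⟩ := h
    simp only [Cls, Set.mem_setOf_eq]
    constructor
    · rintro ⟨hd, hj⟩
      refine ⟨?_, ?_⟩
      · rcases hd with hd | hd
        · exact Or.inr (by rw [show (2*z - a2) - (2*z - a1) = -(a2 - a1) by ring, hd])
        · exact Or.inl (by rw [show (2*z - a2) - (2*z - a1) = -(a2 - a1) by ring, hd]; ring)
      · have hp : par m (2*z - a1) = par m a1 := by
          rw [map_sub, map_mul, map_ofNat]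
          exact two_mul_sub _ _
        rcases hj with ⟨h1, h2, h3⟩ | ⟨h1, h2, h3⟩
        · exact Or.inl ⟨by rw [hp, h1], h2, h3⟩
        · exact Or.inr ⟨by rw [hp, h1], h2, h3⟩
    · rintro ⟨hd, hj⟩
      refine ⟨?_, ?_⟩
      · rcases hd with hd | hd
        · exact Or.inr (by rw [show a2 - a1 = -((2*z - a2) - (2*z - a1)) by ring, hd])
        · exact Or.inl (by rw [show a2 - a1 = -((2*z - a2) - (2*z - a1)) by ring, hd]; ring)
      · have hp : par m (2*z - a1) = par m a1 := by
          rw [map_sub, map_mul, map_ofNat]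
          exact two_mul_sub _ _
        rcases hj with ⟨h1, h2, h3⟩ | ⟨h1, h2, h3⟩
        · exact Or.inl ⟨by rw [← hp, h1], h2, h3⟩
        · exact Or.inr ⟨by rw [← hp, h1], h2, h3⟩
  · subst h
    have key : ∀ x1 x2 : ZMod (2*m), ∀ g1 g2 : Bool,
        ((x1, g1), (x2, g2)) ∈ Cls m d j e1 e2 → ((x2, g2), (x1, g1)) ∈ Cls m d j e1 e2 := by
      rintro x1 x2 g1 g2 ⟨hd, hj⟩
      have hpd : par m x2 = par m x1 + par m d := by
        have : x2 = x1 + (x2 - x1) := by ring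
        rw [this, map_add]
        rcases hd with hd | hd
        · rw [hd]
        · rw [hd, map_neg, neg_par]
      refine ⟨?_, ?_⟩
      · rcases hd with hd | hd
        · exact Or.inr (by rw [show x1 - x2 = -(x2 - x1) by ring, hd])
        · exact Or.inl (by rw [show x1 - x2 = -(x2 - x1) by ring, hd]; ring)
      · rcases hj with ⟨h1, h2, h3⟩ | ⟨h1, h2, h3⟩
        · exact Or.inr ⟨by rw [hpd, h1], h3, h2⟩
        · exact Or.inl ⟨by rw [hpd, h1, add_add_self], h3, h2⟩
    constructor
    · exact key a1 a2 f1 f2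
    · exact key a2 a1 f2 f1

lemma reach [NeZero (2*m)] (p q : P m)
    (h1 : q.2.1 - q.1.1 = p.2.1 - p.1.1 ∨ q.2.1 - q.1.1 = -(p.2.1 - p.1.1))
    (h2 : par m q.1.1 = par m p.1.1) (h3 : q.1.2 = p.1.2) (h4 : q.2.2 = p.2.2) :
    ((dihedral (2*m)).double).tensorTauEqv p q := by
  obtain ⟨⟨p1, f1⟩, ⟨p2, f2⟩⟩ := p
  obtain ⟨⟨q1, g1⟩, ⟨q2, g2⟩⟩ := q
  simp only at h1 h2 h3 h4
  subst h3 h4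
  rcases h1 with h1 | h1
  · -- q2 - q1 = p2 - p1 : two steps
    obtain ⟨t, ht⟩ := exists_half m (q1 - p1) (by rw [map_sub, h2, sub_self])
    have e1 : q1 = 2*t - (2*(0:ZMod (2*m)) - p1) := by linear_combination ht
    have e2 : q2 = 2*t - (2*(0:ZMod (2*m)) - p2) := by linear_combination ht + h1
    exact Relation.EqvGen.trans _ ((2*(0:ZMod (2*m)) - p1, g1), (2*0 - p2, g2)) _
      (Relation.EqvGen.rel _ _ (Or.inl ((step_iff m _ _).2 ⟨0, rfl⟩)))
      (Relation.EqvGen.rel _ _ (Or.inl ((step_iff m _ _).2 ⟨t, by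
        simp only [Prod.mk.injEq]; exact ⟨⟨e1, trivial⟩, e2, trivial⟩⟩)))
  · -- q2 - q1 = -(p2 - p1) : one step
    obtain ⟨t, ht⟩ := exists_half m (q1 + p1)
      (by rw [map_add, h2]; exact (two_mul (par m p1)).symm.trans (by
        have := add_add_self 0 (par m p1); rw [zero_add] at this; rw [← this]; ring))
    have e1 : q1 = 2*t - p1 := by linear_combination ht
    have e2 : q2 = 2*t - p2 := by linear_combination ht + h1
    exact Relation.EqvGen.rel _ _ (Or.inl ((step_iff m _ _).2 ⟨t, by
      simp only [Prod.mk.injEq]; exact ⟨⟨e1, trivial⟩, e2, trivial⟩⟩))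

lemma class_eq [NeZero (2*m)] (p : P m) :
    {q | ((dihedral (2*m)).double).tensorTauEqv p q} =
      Cls m (p.2.1 - p.1.1) (par m p.1.1) p.1.2 p.2.2 := by
  apply Set.Subset.antisymm
  · intro q hq
    have : p ∈ Cls m (p.2.1 - p.1.1) (par m p.1.1) p.1.2 p.2.2 :=
      ⟨Or.inl rfl, Or.inl ⟨rfl, rfl, rfl⟩⟩
    have main : ∀ a b : P m, ((dihedral (2*m)).double).tensorTauEqv a b →
        (a ∈ Cls m (p.2.1 - p.1.1) (par m p.1.1) p.1.2 p.2.2 ↔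
         b ∈ Cls m (p.2.1 - p.1.1) (par m p.1.1) p.1.2 p.2.2) := by
      intro a b hab
      induction hab with
      | rel x y h => exact cls_key _ _ _ _ x y h
      | refl x => exact Iff.rfl
      | symm x y _ ih => exact ih.symm
      | trans x y z _ _ ih1 ih2 => exact ih1.trans ih2
    exact (main p q hq).1 this
  · rintro q ⟨hd, hj⟩
    rcases hj with ⟨h1, h2, h3⟩ | ⟨h1, h2, h3⟩
    · exact reach p q hd h1 h2 h3
    · refine Relation.EqvGen.trans _ p.swap _
        (Relation.EqvGen.rel _ _ (Or.inr rfl)) (reach p.swap q ?_ ?_ h2 h3)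
      · simp only [Prod.swap]
        rcases hd with hd | hd
        · exact Or.inr (by rw [hd]; ring)
        · exact Or.inl (by rw [hd]; ring)
      · simp only [Prod.swap]
        have h5 := map_add (par m) p.1.1 (p.2.1 - p.1.1)
        rw [show p.1.1 + (p.2.1 - p.1.1) = p.2.1 by ring] at h5
        rw [h1, ← h5]

end S15
namespace S15
variable {m : ℕ}

lemma zmod2_cases : ∀ j : ZMod 2, j = 0 ∨ j = 1 := by decide

lemma evenClass_iff [NeZero (2*m)] (i : ZMod (2*m)) :
    isEvenClass (2*m) i ↔ par m i = 0 := by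
  constructor
  · rintro ⟨a, ⟨r, rfl⟩, rfl⟩
    rw [map_intCast (par m), ZMod.intCast_zmod_eq_zero_iff_dvd]
    exact ⟨r, by ring⟩
  · intro h
    rw [par_val] at h
    obtain ⟨u, hu⟩ := (ZMod.natCast_eq_zero_iff _ 2).1 h
    refine ⟨(i.val : ℤ), ⟨(u : ℤ), by rw [hu]; push_cast; ring⟩, ?_⟩
    push_cast
    simp [ZMod.natCast_val, ZMod.cast_id]

lemma oddClass_iff [NeZero (2*m)] (i : ZMod (2*m)) :
    isOddClass (2*m) i ↔ par m i = 1 := by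
  constructor
  · rintro ⟨a, ⟨r, rfl⟩, rfl⟩
    rw [map_intCast (par m)]
    push_cast
    rw [show ((2:ZMod 2)) = 0 from rfl]
    ring
  · intro h
    rcases Nat.even_or_odd i.val with he | ho
    · exfalso
      rw [par_val] at h
      obtain ⟨r, hr⟩ := he
      rw [hr] at h
      have : ((r + r : ℕ) : ZMod 2) = 0 := by push_cast; ring_nf; rw [show ((2:ZMod 2)) = 0 from rfl]; ring
      rw [this] at h
      exact absurd h (by decide)
    · obtain ⟨r, hr⟩ := ho
      refine ⟨(i.val : ℤ), ⟨(r : ℤ), by rw [hr]; push_cast; ring⟩, ?_⟩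
      push_cast
      simp [ZMod.natCast_val, ZMod.cast_id]

def Eset' (m k : ℕ) (j : ZMod 2) (ε δ : Bool) : Set (P m) :=
  {q | par m q.1.1 = j ∧ q.1.2 = ε ∧ q.2.2 = δ ∧
    (q.2.1 - q.1.1 = (k : ZMod (2*m)) ∨ q.2.1 - q.1.1 = -(k : ZMod (2*m)))}

lemma esetD0_eq [NeZero (2*m)] (k : ℕ) (ε δ : Bool) :
    EsetD0 (2*m) k ε δ = Eset' m k 0 ε δ := by
  ext q
  constructor
  · rintro ⟨i, hi, h | h⟩ <;> subst h <;>
      exact ⟨(evenClass_iff i).1 hi, rfl, rfl, by simp⟩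
  · rintro ⟨h1, h2, h3, hd⟩
    obtain ⟨⟨q1, g1⟩, ⟨q2, g2⟩⟩ := q
    simp only at h1 h2 h3 hd
    subst h2 h3
    refine ⟨q1, (evenClass_iff q1).2 h1, ?_⟩
    rcases hd with hd | hd
    · exact Or.inl (by rw [show q2 = q1 + (k:ZMod (2*m)) by linear_combination hd])
    · exact Or.inr (by rw [show q2 = q1 - (k:ZMod (2*m)) by linear_combination hd])

lemma esetD1_eq [NeZero (2*m)] (k : ℕ) (ε δ : Bool) :
    EsetD1 (2*m) k ε δ = Eset' m k 1 ε δ := by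
  ext q
  constructor
  · rintro ⟨i, hi, h | h⟩ <;> subst h <;>
      exact ⟨(oddClass_iff i).1 hi, rfl, rfl, by simp⟩
  · rintro ⟨h1, h2, h3, hd⟩
    obtain ⟨⟨q1, g1⟩, ⟨q2, g2⟩⟩ := q
    simp only at h1 h2 h3 hd
    subst h2 h3
    refine ⟨q1, (oddClass_iff q1).2 h1, ?_⟩
    rcases hd with hd | hd
    · exact Or.inl (by rw [show q2 = q1 + (k:ZMod (2*m)) by linear_combination hd])
    · exact Or.inr (by rw [show q2 = q1 - (k:ZMod (2*m)) by linear_combination hd])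

lemma cls_union (k : ℕ) (j : ZMod 2) (e1 e2 : Bool) :
    Cls m (k : ZMod (2*m)) j e1 e2 =
      Eset' m k j e1 e2 ∪ Eset' m k (j + (k : ZMod 2)) e2 e1 := by
  ext q
  simp only [Cls, Eset', Set.mem_setOf_eq, Set.mem_union, par_natCast]
  tauto

lemma even_cast_two {k : ℕ} (h : Even k) : (k : ZMod 2) = 0 := by
  obtain ⟨r, rfl⟩ := h
  push_cast
  ring_nf
  rw [show ((2:ZMod 2)) = 0 from rfl]
  ring

lemma odd_cast_two {k : ℕ} (h : Odd k) : (k : ZMod 2) = 1 := by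
  obtain ⟨r, rfl⟩ := h
  push_cast
  rw [show ((2:ZMod 2)) = 0 from rfl]
  ring

lemma exists_k [NeZero (2*m)] (d : ZMod (2*m)) :
    ∃ k ≤ m, ((k : ZMod (2*m)) = d ∨ (k : ZMod (2*m)) = -d) := by
  have hv : d.val < 2*m := ZMod.val_lt d
  have hd : ((d.val : ℕ) : ZMod (2*m)) = d := by simp [ZMod.natCast_val, ZMod.cast_id]
  by_cases h : d.val ≤ m
  · exact ⟨d.val, h, Or.inl hd⟩
  · refine ⟨2*m - d.val, by omega, Or.inr ?_⟩
    rw [Nat.cast_sub (le_of_lt hv), hd]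
    simp

lemma k_inj {k k' : ℕ} (hk : k ≤ m) (hk' : k' ≤ m)
    (h : (k : ZMod (2*m)) = (k' : ZMod (2*m)) ∨ (k : ZMod (2*m)) = -(k' : ZMod (2*m))) :
    k = k' := by
  rcases Nat.eq_zero_or_pos m with rfl | hm
  · omega
  haveI : NeZero (2*m) := ⟨by omega⟩
  rcases h with h | h
  · have h1 : (k : ZMod (2*m)).val = k := ZMod.val_natCast_of_lt (by omega)
    have h2 : (k' : ZMod (2*m)).val = k' := ZMod.val_natCast_of_lt (by omega)
    rw [← h1, ← h2, h]
  · have : ((k + k' : ℕ) : ZMod (2*m)) = 0 := by push_cast; rw [h]; ring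
    obtain ⟨u, hu⟩ := (ZMod.natCast_eq_zero_iff _ _).1 this
    rcases u with _ | u
    · omega
    · have : 2*m*(u+1) ≥ 2*m := by nlinarith
      omega

end S15
namespace S15
variable {m : ℕ}

lemma cls_neg (d : ZMod (2*m)) (j : ZMod 2) (e1 e2 : Bool) :
    Cls m (-d) j e1 e2 = Cls m d j e1 e2 := by
  ext q
  simp only [Cls, Set.mem_setOf_eq, map_neg, neg_par, neg_neg]
  tauto

lemma cls_comm (k : ℕ) (j : ZMod 2) (e1 e2 : Bool) :
    Cls m (k : ZMod (2*m)) j e1 e2 =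
      Cls m (k : ZMod (2*m)) (j + (k : ZMod 2)) e2 e1 := by
  rw [cls_union, cls_union, add_add_self, Set.union_comm]

-- even k evaluations
lemma clsA {k : ℕ} (he : Even k) (j : ZMod 2) (e1 e2 : Bool) [NeZero (2*m)] :
    Cls m (k : ZMod (2*m)) j e1 e2 = Eset' m k j e1 e2 ∪ Eset' m k j e2 e1 := by
  rw [cls_union, even_cast_two he, add_zero]

lemma clsB {k : ℕ} (ho : Odd k) (j : ZMod 2) (e1 e2 : Bool) [NeZero (2*m)] :
    Cls m (k : ZMod (2*m)) j e1 e2 = Eset' m k j e1 e2 ∪ Eset' m k (j + 1) e2 e1 := by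
  rw [cls_union, odd_cast_two ho]

end S15
namespace S15
variable {m : ℕ}

lemma one_add_one_z : (1 + 1 : ZMod 2) = 0 := rfl

def Listed (m k : ℕ) (S : Set (P m)) : Prop :=
  (Even k ∧
    (S = EsetD0 (2*m) k true true ∨ S = EsetD0 (2*m) k false false ∨
     S = EsetD0 (2*m) k true false ∪ EsetD0 (2*m) k false true ∨
     S = EsetD1 (2*m) k true true ∨ S = EsetD1 (2*m) k false false ∨
     S = EsetD1 (2*m) k true false ∪ EsetD1 (2*m) k false true)) ∨
  (Odd k ∧
    (S = EsetD0 (2*m) k true true ∪ EsetD1 (2*m) k true true ∨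
     S = EsetD0 (2*m) k false false ∪ EsetD1 (2*m) k false false ∨
     S = EsetD0 (2*m) k true false ∪ EsetD1 (2*m) k false true ∨
     S = EsetD1 (2*m) k true false ∪ EsetD0 (2*m) k false true))

lemma listed_cls [NeZero (2*m)] (k : ℕ) (j : ZMod 2) (e1 e2 : Bool) :
    Listed m k (Cls m (k : ZMod (2*m)) j e1 e2) := by
  rcases Nat.even_or_odd k with he | ho
  · left
    refine ⟨he, ?_⟩
    rcases zmod2_cases j with rfl | rfl
    · cases e1 <;> cases e2
      · right; left; rw [clsA he, Set.union_self, esetD0_eq]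
      · right; right; left; rw [clsA he, esetD0_eq, esetD0_eq, Set.union_comm]
      · right; right; left; rw [clsA he, esetD0_eq, esetD0_eq]
      · left; rw [clsA he, Set.union_self, esetD0_eq]
    · cases e1 <;> cases e2
      · right;right;right;right;left; rw [clsA he, Set.union_self, esetD1_eq]
      · right;right;right;right;right; rw [clsA he, esetD1_eq, esetD1_eq, Set.union_comm]
      · right;right;right;right;right; rw [clsA he, esetD1_eq, esetD1_eq]
      · right;right;right;left; rw [clsA he, Set.union_self, esetD1_eq]
  · right
    refine ⟨ho, ?_⟩
    rcases zmod2_cases j with rfl | rfl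
    · cases e1 <;> cases e2
      · right;left; rw [clsB ho, zero_add, esetD0_eq, esetD1_eq]
      · right;right;right; rw [clsB ho, zero_add, esetD0_eq, esetD1_eq, Set.union_comm]
      · right;right;left; rw [clsB ho, zero_add, esetD0_eq, esetD1_eq]
      · left; rw [clsB ho, zero_add, esetD0_eq, esetD1_eq]
    · cases e1 <;> cases e2
      · right;left; rw [clsB ho, one_add_one_z, esetD1_eq, esetD0_eq, Set.union_comm]
      · right;right;left; rw [clsB ho, one_add_one_z, esetD1_eq, esetD0_eq, Set.union_comm]
      · right;right;right; rw [clsB ho, one_add_one_z, esetD1_eq, esetD0_eq]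
      · left; rw [clsB ho, one_add_one_z, esetD1_eq, esetD0_eq, Set.union_comm]

lemma cls_of_listed [NeZero (2*m)] (k : ℕ) (S : Set (P m)) (h : Listed m k S) :
    ∃ j e1 e2, S = Cls m (k : ZMod (2*m)) j e1 e2 := by
  rcases h with ⟨he, h⟩ | ⟨ho, h⟩
  · rcases h with rfl|rfl|rfl|rfl|rfl|rfl
    · exact ⟨0, true, true, by rw [clsA he, Set.union_self, esetD0_eq]⟩
    · exact ⟨0, false, false, by rw [clsA he, Set.union_self, esetD0_eq]⟩
    · exact ⟨0, true, false, by rw [clsA he, esetD0_eq, esetD0_eq]⟩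
    · exact ⟨1, true, true, by rw [clsA he, Set.union_self, esetD1_eq]⟩
    · exact ⟨1, false, false, by rw [clsA he, Set.union_self, esetD1_eq]⟩
    · exact ⟨1, true, false, by rw [clsA he, esetD1_eq, esetD1_eq]⟩
  · rcases h with rfl|rfl|rfl|rfl
    · exact ⟨0, true, true, by rw [clsB ho, zero_add, esetD0_eq, esetD1_eq]⟩
    · exact ⟨0, false, false, by rw [clsB ho, zero_add, esetD0_eq, esetD1_eq]⟩
    · exact ⟨0, true, false, by rw [clsB ho, zero_add, esetD0_eq, esetD1_eq]⟩
    · exact ⟨1, true, false, by rw [clsB ho, one_add_one_z, esetD1_eq, esetD0_eq]⟩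

lemma class_rep0 [NeZero (2*m)] (k : ℕ) (e1 e2 : Bool) :
    {q | ((dihedral (2*m)).double).tensorTauEqv (((0 : ZMod (2*m)), e1), ((k : ZMod (2*m)), e2)) q}
      = Cls m (k : ZMod (2*m)) 0 e1 e2 := by
  rw [class_eq]
  norm_num

lemma class_rep1 [NeZero (2*m)] (k : ℕ) (e1 e2 : Bool) :
    {q | ((dihedral (2*m)).double).tensorTauEqv (((1 : ZMod (2*m)), e1), (1 + (k : ZMod (2*m)), e2)) q}
      = Cls m (k : ZMod (2*m)) 1 e1 e2 := by
  rw [class_eq]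
  rw [show (1 + (k:ZMod (2*m))) - 1 = (k:ZMod (2*m)) by ring, map_one]

lemma exists_class_cls [NeZero (2*m)] (k : ℕ) (j : ZMod 2) (e1 e2 : Bool) :
    ∃ p : P m, {q | ((dihedral (2*m)).double).tensorTauEqv p q} = Cls m (k : ZMod (2*m)) j e1 e2 := by
  rcases zmod2_cases j with rfl | rfl
  · exact ⟨_, class_rep0 k e1 e2⟩
  · exact ⟨_, class_rep1 k e1 e2⟩

lemma class_listed [NeZero (2*m)] (hm : m ≠ 0) (p : P m) :
    ∃ k ≤ m, Listed m k {q | ((dihedral (2*m)).double).tensorTauEqv p q} := by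
  obtain ⟨k, hk, hcast⟩ := exists_k (p.2.1 - p.1.1)
  refine ⟨k, hk, ?_⟩
  have hcls : {q | ((dihedral (2*m)).double).tensorTauEqv p q}
      = Cls m (k : ZMod (2*m)) (par m p.1.1) p.1.2 p.2.2 := by
    rw [class_eq]
    rcases hcast with h | h
    · rw [← h]
    · have h2 : p.2.1 - p.1.1 = -(k : ZMod (2*m)) := by rw [h, neg_neg]
      rw [h2, cls_neg]
  rw [hcls]
  exact listed_cls k _ _ _

end S15
namespace S15
variable {m : ℕ}

def repsF (m k : ℕ) : Finset (P m) :=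
  if Even k then
    {(((0:ZMod (2*m)), true), ((k:ZMod (2*m)), true)),
     (((0:ZMod (2*m)), false), ((k:ZMod (2*m)), false)),
     (((0:ZMod (2*m)), true), ((k:ZMod (2*m)), false)),
     (((1:ZMod (2*m)), true), (1+(k:ZMod (2*m)), true)),
     (((1:ZMod (2*m)), false), (1+(k:ZMod (2*m)), false)),
     (((1:ZMod (2*m)), true), (1+(k:ZMod (2*m)), false))}
  else
    {(((0:ZMod (2*m)), true), ((k:ZMod (2*m)), true)),
     (((0:ZMod (2*m)), false), ((k:ZMod (2*m)), false)),
     (((0:ZMod (2*m)), true), ((k:ZMod (2*m)), false)),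
     (((1:ZMod (2*m)), true), (1+(k:ZMod (2*m)), false))}

def reps (m : ℕ) : Finset (P m) := (Finset.range (m+1)).biUnion (repsF m)

lemma card_repsF (hm : m ≠ 0) (k : ℕ) : (repsF m k).card = if Even k then 6 else 4 := by
  haveI : Fact (1 < 2*m) := ⟨by omega⟩
  have h01 : (0 : ZMod (2*m)) ≠ 1 := zero_ne_one
  unfold repsF
  split
  · rw [Finset.card_insert_of_notMem (by simp [h01]),
        Finset.card_insert_of_notMem (by simp [h01]),
        Finset.card_insert_of_notMem (by simp [h01]),
        Finset.card_insert_of_notMem (by simp [h01]),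
        Finset.card_insert_of_notMem (by simp [h01]),
        Finset.card_singleton]
  · rw [Finset.card_insert_of_notMem (by simp [h01]),
        Finset.card_insert_of_notMem (by simp [h01]),
        Finset.card_insert_of_notMem (by simp [h01]),
        Finset.card_singleton]

lemma repsF_diff {k : ℕ} {p : P m} (hp : p ∈ repsF m k) :
    p.2.1 - p.1.1 = (k : ZMod (2*m)) := by
  unfold repsF at hp
  split at hp <;> simp only [Finset.mem_insert, Finset.mem_singleton] at hp <;>
    rcases hp with rfl|rfl|rfl|rfl|rfl|rfl <;> simp
  
lemma reps_card (hm : m ≠ 0) :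
    (reps m).card = (Finset.range (m+1)).sum (fun k => if Even k then 6 else 4) := by
  rw [reps, Finset.card_biUnion]
  · exact Finset.sum_congr rfl fun k _ => card_repsF hm k
  · intro k hk k' hk' hne
    rw [Function.onFun, Finset.disjoint_left]
    intro p hp hp'
    exact hne (k_inj (by simpa using Nat.lt_succ_iff.mp (Finset.mem_range.mp hk))
      (by simpa using Nat.lt_succ_iff.mp (Finset.mem_range.mp hk'))
      (Or.inl (by rw [← repsF_diff hp, ← repsF_diff hp'])))

lemma sum_count (m : ℕ) :
    (Finset.range (m+1)).sum (fun k => if Even k then 6 else 4)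
      = if Odd m then 5*(m+1) else 5*m+6 := by
  induction m with
  | zero => simp
  | succ n ih =>
    rw [Finset.sum_range_succ, ih]
    rcases Nat.even_or_odd n with h | h
    · have hno : ¬ Odd n := Nat.not_odd_iff_even.mpr h
      have hne : ¬ Even (n+1) := by rw [Nat.even_add_one]; exact not_not_intro h
      have ho : Odd (n+1) := h.add_one
      rw [if_neg hno, if_neg hne, if_pos ho]
      ring
    · have hno : Odd n := h
      have hne : Even (n+1) := h.add_one
      have ho : ¬ Odd (n+1) := Nat.not_odd_iff_even.mpr hne
      rw [if_pos hno, if_pos hne, if_neg ho]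

end S15
namespace S15
variable {m : ℕ}

lemma exists_rep [NeZero (2*m)] (hm : m ≠ 0) (p : P m) :
    ∃ r ∈ reps m, ((dihedral (2*m)).double).tensorTauEqv r p := by
  obtain ⟨k, hk, hcast⟩ := exists_k (p.2.1 - p.1.1)
  have hkr : k ∈ Finset.range (m+1) := Finset.mem_range.mpr (by omega)
  have hcls : {q | ((dihedral (2*m)).double).tensorTauEqv p q}
      = Cls m (k : ZMod (2*m)) (par m p.1.1) p.1.2 p.2.2 := by
    rw [class_eq]
    rcases hcast with h | h
    · rw [← h]
    · have h2 : p.2.1 - p.1.1 = -(k : ZMod (2*m)) := by rw [h, neg_neg]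
      rw [h2, cls_neg]
  have key : ∀ r : P m, r ∈ repsF m k →
      r ∈ Cls m (k : ZMod (2*m)) (par m p.1.1) p.1.2 p.2.2 →
      ∃ r ∈ reps m, ((dihedral (2*m)).double).tensorTauEqv r p := by
    intro r hr hmem
    refine ⟨r, Finset.mem_biUnion.mpr ⟨k, hkr, hr⟩, Relation.EqvGen.symm _ _ ?_⟩
    have : r ∈ {q | ((dihedral (2*m)).double).tensorTauEqv p q} := by rw [hcls]; exact hmem
    exact this
  rcases Nat.even_or_odd k with he | ho
  · have hc : par m ((k : ℕ) : ZMod (2*m)) = 0 := by rw [par_natCast, even_cast_two he]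
    have hrF : ∀ e1 e2 : Bool, (((0:ZMod (2*m)), e1), ((k:ZMod (2*m)), e2)) ∈ repsF m k → True := fun _ _ _ => trivial
    rcases zmod2_cases (par m p.1.1) with hj | hj <;> cases hb1 : p.1.2 <;> cases hb2 : p.2.2
    · exact key (((0:ZMod (2*m)), false), ((k:ZMod (2*m)), false))
        (by simp [repsF, he]) ⟨Or.inl (by ring), Or.inl ⟨by rw [map_zero, hj], hb1.symm, hb2.symm⟩⟩
    · exact key (((0:ZMod (2*m)), true), ((k:ZMod (2*m)), false))
        (by simp [repsF, he]) ⟨Or.inl (by ring), Or.inr ⟨by rw [map_zero, hj, hc, add_zero], hb2.symm, hb1.symm⟩⟩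
    · exact key (((0:ZMod (2*m)), true), ((k:ZMod (2*m)), false))
        (by simp [repsF, he]) ⟨Or.inl (by ring), Or.inl ⟨by rw [map_zero, hj], hb1.symm, hb2.symm⟩⟩
    · exact key (((0:ZMod (2*m)), true), ((k:ZMod (2*m)), true))
        (by simp [repsF, he]) ⟨Or.inl (by ring), Or.inl ⟨by rw [map_zero, hj], hb1.symm, hb2.symm⟩⟩
    · exact key (((1:ZMod (2*m)), false), (1+(k:ZMod (2*m)), false))
        (by simp [repsF, he]) ⟨Or.inl (by ring), Or.inl ⟨by rw [map_one, hj], hb1.symm, hb2.symm⟩⟩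
    · exact key (((1:ZMod (2*m)), true), (1+(k:ZMod (2*m)), false))
        (by simp [repsF, he]) ⟨Or.inl (by ring), Or.inr ⟨by rw [map_one, hj, hc, add_zero], hb2.symm, hb1.symm⟩⟩
    · exact key (((1:ZMod (2*m)), true), (1+(k:ZMod (2*m)), false))
        (by simp [repsF, he]) ⟨Or.inl (by ring), Or.inl ⟨by rw [map_one, hj], hb1.symm, hb2.symm⟩⟩
    · exact key (((1:ZMod (2*m)), true), (1+(k:ZMod (2*m)), true))
        (by simp [repsF, he]) ⟨Or.inl (by ring), Or.inl ⟨by rw [map_one, hj], hb1.symm, hb2.symm⟩⟩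
  · have hc : par m ((k : ℕ) : ZMod (2*m)) = 1 := by rw [par_natCast, odd_cast_two ho]
    have hne : ¬ Even k := Nat.not_even_iff_odd.mpr ho
    rcases zmod2_cases (par m p.1.1) with hj | hj <;> cases hb1 : p.1.2 <;> cases hb2 : p.2.2
    · -- j=0, (F,F): rep ((0,F),(k,F)) first disjunct
      exact key (((0:ZMod (2*m)), false), ((k:ZMod (2*m)), false))
        (by simp [repsF, hne]) ⟨Or.inl (by ring), Or.inl ⟨by rw [map_zero, hj], hb1.symm, hb2.symm⟩⟩
    · -- j=0, (F,T): rep ((1,T),(1+k,F)) second disjunct: par 1 = 0+1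
      exact key (((1:ZMod (2*m)), true), (1+(k:ZMod (2*m)), false))
        (by simp [repsF, hne]) ⟨Or.inl (by ring), Or.inr ⟨by rw [map_one, hj, hc, zero_add], hb2.symm, hb1.symm⟩⟩
    · -- j=0, (T,F): rep ((0,T),(k,F)) first
      exact key (((0:ZMod (2*m)), true), ((k:ZMod (2*m)), false))
        (by simp [repsF, hne]) ⟨Or.inl (by ring), Or.inl ⟨by rw [map_zero, hj], hb1.symm, hb2.symm⟩⟩
    · -- j=0, (T,T): rep ((0,T),(k,T)) first
      exact key (((0:ZMod (2*m)), true), ((k:ZMod (2*m)), true))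
        (by simp [repsF, hne]) ⟨Or.inl (by ring), Or.inl ⟨by rw [map_zero, hj], hb1.symm, hb2.symm⟩⟩
    · -- j=1, (F,F): rep ((0,F),(k,F)) second: par 0 = 1+1
      exact key (((0:ZMod (2*m)), false), ((k:ZMod (2*m)), false))
        (by simp [repsF, hne]) ⟨Or.inl (by ring), Or.inr ⟨by rw [map_zero, hj, hc, one_add_one_z], hb2.symm, hb1.symm⟩⟩
    · -- j=1, (F,T): rep ((0,T),(k,F)) second: par 0 = 1+1, bools (e2,e1)=(T,F)
      exact key (((0:ZMod (2*m)), true), ((k:ZMod (2*m)), false))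
        (by simp [repsF, hne]) ⟨Or.inl (by ring), Or.inr ⟨by rw [map_zero, hj, hc, one_add_one_z], hb2.symm, hb1.symm⟩⟩
    · -- j=1, (T,F): rep ((1,T),(1+k,F)) first
      exact key (((1:ZMod (2*m)), true), (1+(k:ZMod (2*m)), false))
        (by simp [repsF, hne]) ⟨Or.inl (by ring), Or.inl ⟨by rw [map_one, hj], hb1.symm, hb2.symm⟩⟩
    · -- j=1, (T,T): rep ((0,T),(k,T)) second: par 0 = 1+1, bools (T,T)
      exact key (((0:ZMod (2*m)), true), ((k:ZMod (2*m)), true))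
        (by simp [repsF, hne]) ⟨Or.inl (by ring), Or.inr ⟨by rw [map_zero, hj, hc, one_add_one_z], hb2.symm, hb1.symm⟩⟩

lemma rep_inj [NeZero (2*m)] (hm : m ≠ 0) :
    ∀ r ∈ reps m, ∀ r' ∈ reps m, ((dihedral (2*m)).double).tensorTauEqv r r' → r = r' := by
  intro r hr r' hr' hEqv
  obtain ⟨k, hkr, hrF⟩ := Finset.mem_biUnion.mp hr
  obtain ⟨k', hkr', hrF'⟩ := Finset.mem_biUnion.mp hr'
  have hk : k ≤ m := Nat.lt_succ_iff.mp (Finset.mem_range.mp hkr)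
  have hk' : k' ≤ m := Nat.lt_succ_iff.mp (Finset.mem_range.mp hkr')
  have hmem : r' ∈ Cls m ((k:ℕ) : ZMod (2*m)) (par m r.1.1) r.1.2 r.2.2 := by
    have : r' ∈ {q | ((dihedral (2*m)).double).tensorTauEqv r q} := hEqv
    rw [class_eq, repsF_diff hrF] at this
    exact this
  have hkk : k = k' := by
    have hd' := repsF_diff hrF'
    rcases hmem.1 with h | h
    · exact (k_inj hk' hk (Or.inl (by rw [← hd', h]))).symm
    · exact (k_inj hk' hk (Or.inr (by rw [← hd', h]))).symm
  subst hkk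
  rcases Nat.even_or_odd k with he | ho
  · have hc : par m ((k : ℕ) : ZMod (2*m)) = 0 := by rw [par_natCast, even_cast_two he]
    unfold repsF at hrF hrF'
    rw [if_pos he] at hrF hrF'
    simp only [Finset.mem_insert, Finset.mem_singleton] at hrF hrF'
    rcases hrF with rfl|rfl|rfl|rfl|rfl|rfl <;> rcases hrF' with rfl|rfl|rfl|rfl|rfl|rfl <;>
      first
        | rfl
        | simp only [Cls, Set.mem_setOf_eq, map_zero, map_one, hc, add_zero] at hmem <;>
            simp at hmem
  · have hc : par m ((k : ℕ) : ZMod (2*m)) = 1 := by rw [par_natCast, odd_cast_two ho]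
    have hne : ¬ Even k := Nat.not_even_iff_odd.mpr ho
    unfold repsF at hrF hrF'
    rw [if_neg hne] at hrF hrF'
    simp only [Finset.mem_insert, Finset.mem_singleton] at hrF hrF'
    rcases hrF with rfl|rfl|rfl|rfl <;> rcases hrF' with rfl|rfl|rfl|rfl <;>
      first
        | rfl
        | simp only [Cls, Set.mem_setOf_eq, map_zero, map_one, hc, one_add_one_z, zero_add] at hmem <;>
            simp [one_add_one_z] at hmem

lemma card_tensorTau [NeZero (2*m)] (hm : m ≠ 0) :
    Nat.card (((dihedral (2*m)).double).TensorTau) = if Odd m then 5*(m+1) else 5*m+6 := by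
  classical
  set s := Relation.EqvGen.setoid
    (fun p q : P m => ((dihedral (2*m)).double).tensorStep p q ∨ q = p.swap) with hs
  have hbij : Function.Bijective
      (fun x : {x // x ∈ reps m} => (Quotient.mk s x.1 : Quotient s)) := by
    constructor
    · rintro ⟨x, hx⟩ ⟨y, hy⟩ h
      exact Subtype.ext (rep_inj hm x hx y hy (Quotient.exact h))
    · intro q
      obtain ⟨p, rfl⟩ := Quotient.exists_rep q
      obtain ⟨r, hrm, hrp⟩ := exists_rep hm p
      exact ⟨⟨r, hrm⟩, Quotient.sound hrp⟩
  have h1 : Nat.card {x // x ∈ reps m} = Nat.card (Quotient s) :=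
    Nat.card_eq_of_bijective _ hbij
  have h2 : Nat.card (((dihedral (2*m)).double).TensorTau) = Nat.card (Quotient s) := rfl
  rw [h2, ← h1, Nat.card_eq_finsetCard, reps_card hm, sum_count]

end S15


/-- for `n = 2m` with `m ≥ 1`, the quotient `D(R_n) ⊗ D(R_n) / ⟨τ⟩`
has exactly `5(m+1)` elements if `m` is odd and `5m+6` elements if `m` is even;
its elements are, for even `k ≤ m`: `E(k)ⱼ^{+,+}`, `E(k)ⱼ^{−,−}`,
`E(k)ⱼ^{+,−} ∪ E(k)ⱼ^{−,+}` (`j = 0, 1`), and for odd `k ≤ m`: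
`E(k)₀^{+,+} ∪ E(k)₁^{+,+}`, `E(k)₀^{−,−} ∪ E(k)₁^{−,−}`,
`E(k)₀^{+,−} ∪ E(k)₁^{−,+}`, `E(k)₁^{+,−} ∪ E(k)₀^{−,+}`. -/
theorem statement15 (m : ℕ) (hm : 1 ≤ m) :
    ({S : Set ((ZMod (2 * m) × Bool) × (ZMod (2 * m) × Bool)) |
        ∃ p, S = {q | ((dihedral (2 * m)).double).tensorTauEqv p q}} =
      {S | ∃ k ≤ m,
        (Even k ∧
          (S = EsetD0 (2 * m) k true true ∨
           S = EsetD0 (2 * m) k false false ∨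
           S = EsetD0 (2 * m) k true false ∪ EsetD0 (2 * m) k false true ∨
           S = EsetD1 (2 * m) k true true ∨
           S = EsetD1 (2 * m) k false false ∨
           S = EsetD1 (2 * m) k true false ∪ EsetD1 (2 * m) k false true)) ∨
        (Odd k ∧
          (S = EsetD0 (2 * m) k true true ∪ EsetD1 (2 * m) k true true ∨
           S = EsetD0 (2 * m) k false false ∪ EsetD1 (2 * m) k false false ∨
           S = EsetD0 (2 * m) k true false ∪ EsetD1 (2 * m) k false true ∨
           S = EsetD1 (2 * m) k true false ∪ EsetD0 (2 * m) k false true))}) ∧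
    Nat.card (((dihedral (2 * m)).double).TensorTau) =
      (if Odd m then 5 * (m + 1) else 5 * m + 6) := by
  haveI : NeZero (2 * m) := ⟨by omega⟩
  have hm' : m ≠ 0 := by omega
  constructor
  · ext S
    simp only [Set.mem_setOf_eq]
    constructor
    · rintro ⟨p, rfl⟩
      obtain ⟨k, hk, hL⟩ := S15.class_listed (m := m) hm' p
      exact ⟨k, hk, hL⟩
    · rintro ⟨k, hk, hL⟩
      obtain ⟨j, e1, e2, rfl⟩ := S15.cls_of_listed (m := m) k S hL
      obtain ⟨p, hp⟩ := S15.exists_class_cls (m := m) k j e1 e2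
      exact ⟨p, hp.symm⟩
  · exact S15.card_tensorTau (m := m) hm'
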